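/- For a finite metric space X with metric d such that the similarity matrix of tX is invertible for all large t, the similarity matrix ζ_{tX} converges to the identity matrix as t → ∞, and consequently w_{tX}(tx) → 1 for each point x and Mag(tX) → |X|. -/

import Mathlib

open Matrix Real Filter

/-- For a finite metric space `X` (distinct points) such that the similarity
matrix of `tX` is invertible for all large `t`, the similarity matrix `ζ_{tX}` converges to
the identity matrix as `t → ∞`; consequently each weight `w_{tX}(tx) → 1` and
`Mag (tX) → |X|`. -/
theorem similarity_tendsto_identity (X : Type*) [Fintype X] [DecidableEq X] [MetricSpace X]
    (ζ : ℝ → Matrix X X ℝ)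
    (hζ : ∀ t, ζ t = Matrix.of fun a b => Real.exp (-(t * dist a b)))
    (hinv : ∀ᶠ t in atTop, IsUnit (ζ t).det) :
    Tendsto ζ atTop (nhds (1 : Matrix X X ℝ)) ∧
    (∀ x : X, Tendsto (fun t => ((ζ t)⁻¹ *ᵥ fun _ => (1 : ℝ)) x) atTop (nhds 1)) ∧
    Tendsto (fun t => ∑ x, ((ζ t)⁻¹ *ᵥ fun _ => (1 : ℝ)) x) atTop
      (nhds (Fintype.card X : ℝ)) := by
  have h1 : Tendsto ζ atTop (nhds (1 : Matrix X X ℝ)) := by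
    refine tendsto_pi_nhds.mpr ?_
    intro a
    refine tendsto_pi_nhds.mpr ?_
    intro b
    simp only [hζ, Matrix.of_apply, Matrix.one_apply]
    by_cases hab : a = b
    · subst hab
      simp only [dist_self, mul_zero, neg_zero, Real.exp_zero, if_pos rfl]
      exact tendsto_const_nhds
    · rw [if_neg hab]
      have hd : (0 : ℝ) < dist a b := dist_pos.mpr hab
      have : Tendsto (fun t : ℝ => t * dist a b) atTop atTop :=
        Tendsto.atTop_mul_const hd tendsto_id
      exact Real.tendsto_exp_neg_atTop_nhds_zero.comp this
  have hcinv : ContinuousAt Inv.inv (1 : Matrix X X ℝ) := by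
    apply continuousAt_matrix_inv
    rw [Matrix.det_one]
    have he : (Ring.inverse : ℝ → ℝ) = fun x => x⁻¹ := by
      funext x; exact Ring.inverse_eq_inv x
    rw [he]
    exact continuousAt_inv₀ one_ne_zero
  have h2 : Tendsto (fun t => (ζ t)⁻¹) atTop (nhds (1 : Matrix X X ℝ)) := by
    have := hcinv.tendsto.comp h1
    rwa [inv_one] at this
  have h3 : ∀ x : X, Tendsto (fun t => ((ζ t)⁻¹ *ᵥ fun _ => (1 : ℝ)) x) atTop (nhds 1) := by
    intro x
    have hc : Continuous fun M : Matrix X X ℝ => (M *ᵥ fun _ => (1 : ℝ)) x := by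
      have hm := Continuous.matrix_mulVec (continuous_id : Continuous fun M : Matrix X X ℝ => M)
        (continuous_const : Continuous fun _ : Matrix X X ℝ => (fun _ : X => (1 : ℝ)))
      exact (continuous_apply x).comp hm
    have := (hc.continuousAt (x := (1 : Matrix X X ℝ))).tendsto.comp h2
    simpa [Matrix.one_mulVec, Function.comp_def] using this
  refine ⟨h1, h3, ?_⟩
  have hs := tendsto_finset_sum Finset.univ (fun x (_ : x ∈ Finset.univ) => h3 x)
  simpa [Finset.card_univ] using hs
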